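/- Fix N ≥ 1, two distinct words ξ = (ξ_0,…,ξ_{N-1}) and η = (η_0,…,η_{N-1}) in {1,…,k}^N with ξ_0 = η_0 and ξ_{N-1} = η_{N-1}. Consider words of length ℓN viewed as concatenations of ℓ blocks of length N, and the substitution map F_ℓ that replaces every block equal to ξ by η. Suppose that for a fixed family of sets, no word in the domain family Σ_x^ℓ(s) can have, at any block position i, the property that replacing its i-th block between ξ and η keeps it in the family (this is guaranteed by the disjointness hypothesis: π_s(f_ω^n(f_{ξ_0}∘⋯∘f_{ξ_{N-1}}(M))) ∩ π_s(f_ω^n(f_{η_0}∘⋯∘f_{η_{N-1}}(M))) = ∅ for all n, ω, s). Then F_ℓ restricted to Σ_x^ℓ(s) is injective. -/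

import Mathlib

open Set

/-- `wordMap f [a₀,…,a_{N-1}] = f a₀ ∘ ⋯ ∘ f a_{N-1}`. -/
def wordMap {α : Type*} {k : ℕ} (f : Fin k → α → α) : List (Fin k) → α → α
  | [] => id
  | i :: t => f i ∘ wordMap f t

/-- `iterMap f ω n = f_{ω_{n-1}} ∘ ⋯ ∘ f_{ω_0}`. -/
def iterMap {α : Type*} {k : ℕ} (f : Fin k → α → α) (ω : ℕ → Fin k) : ℕ → α → α
  | 0 => id
  | n + 1 => f (ω n) ∘ iterMap f ω n

theorem wordMap_append {α : Type*} {k : ℕ} (f : Fin k → α → α) (L1 L2 : List (Fin k)) :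
    wordMap f (L1 ++ L2) = wordMap f L1 ∘ wordMap f L2 := by
  induction L1 with
  | nil => rfl
  | cons a t ih => simp [wordMap, ih, Function.comp_assoc]

theorem iterMap_congr {α : Type*} {k : ℕ} (f : Fin k → α → α) {ω ω' : ℕ → Fin k} :
    ∀ n, (∀ j < n, ω j = ω' j) → iterMap f ω n = iterMap f ω' n
  | 0, _ => rfl
  | n + 1, h => by
    simp only [iterMap, h n (by omega),
      iterMap_congr f n (fun j hj => h j (by omega))]

theorem exists_iterMap {α : Type*} {k : ℕ} (f : Fin k → α → α) (d : Fin k) :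
    ∀ L : List (Fin k), ∃ ω : ℕ → Fin k, iterMap f ω L.length = wordMap f L
  | [] => ⟨fun _ => d, rfl⟩
  | a :: t => by
    obtain ⟨ω, hω⟩ := exists_iterMap f d t
    refine ⟨fun j => if j = t.length then a else ω j, ?_⟩
    show iterMap f _ (t.length + 1) = _
    have hc : iterMap f (fun j => if j = t.length then a else ω j) t.length
        = iterMap f ω t.length :=
      iterMap_congr f t.length (fun j hj => by simp [Nat.ne_of_lt hj])
    simp only [iterMap, hc, hω]
    simp [wordMap]

theorem wordMap_mapsTo {α : Type*} {k : ℕ} {f : Fin k → α → α} {M : Set α}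
    (h : ∀ i, Set.MapsTo (f i) M M) :
    ∀ L, Set.MapsTo (wordMap f L) M M
  | [] => Set.mapsTo_id M
  | a :: t => (h a).comp (wordMap_mapsTo h t)

/-- The composition of the block maps. -/
def gcomp {α : Type*} {k N n : ℕ} (f : Fin k → α → α) (w : Fin n → Fin N → Fin k) : α → α :=
  (List.ofFn fun i => wordMap f (List.ofFn (w i))).foldr (· ∘ ·) id

theorem gcomp_succ {α : Type*} {k N n : ℕ} (f : Fin k → α → α)
    (w : Fin (n + 1) → Fin N → Fin k) :
    gcomp f w = wordMap f (List.ofFn (w 0)) ∘ gcomp f (fun i => w i.succ) := by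
  rw [gcomp, List.ofFn_succ]; rfl

theorem gcomp_mapsTo {α : Type*} {k N : ℕ} {f : Fin k → α → α} {M : Set α}
    (h : ∀ i, Set.MapsTo (f i) M M) :
    ∀ {n : ℕ} (w : Fin n → Fin N → Fin k), Set.MapsTo (gcomp f w) M M := by
  intro n
  induction n with
  | zero => intro w; exact Set.mapsTo_id M
  | succ n ih =>
    intro w
    rw [gcomp_succ]
    exact (wordMap_mapsTo h _).comp (ih _)

theorem aux {Y : Type*} {m k N : ℕ} {M : Set (Fin m → Y)}
    {f : Fin k → (Fin m → Y) → (Fin m → Y)}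
    (hmaps : ∀ i, Set.MapsTo (f i) M M) {ξ η : Fin N → Fin k} {s : Fin m} {x : Y}
    (key : ∀ (P : List (Fin k)) (y z : Fin m → Y), y ∈ M → z ∈ M →
      wordMap f P (wordMap f (List.ofFn ξ) y) s = x →
      wordMap f P (wordMap f (List.ofFn η) z) s = x → False) :
    ∀ (n : ℕ) (P : List (Fin k)) (w w' : Fin n → Fin N → Fin k),
      (∃ z ∈ M, wordMap f P (gcomp f w z) s = x) →
      (∃ z ∈ M, wordMap f P (gcomp f w' z) s = x) →
      (fun i => if w i = ξ then η else w i) = (fun i => if w' i = ξ then η else w' i) →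
      w = w' := by
  intro n
  induction n with
  | zero =>
    intro P w w' _ _ _
    funext i; exact i.elim0
  | succ n ih =>
    intro P w w' hw hw' hF
    obtain ⟨z, hz, hzx⟩ := hw
    obtain ⟨z', hz', hzx'⟩ := hw'
    rw [gcomp_succ] at hzx hzx'
    have hzm : gcomp f (fun i => w i.succ) z ∈ M := gcomp_mapsTo hmaps _ hz
    have hzm' : gcomp f (fun i => w' i.succ) z' ∈ M := gcomp_mapsTo hmaps _ hz'
    have hF0 : (if w 0 = ξ then η else w 0) = (if w' 0 = ξ then η else w' 0) := congrFun hF 0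
    by_cases h00 : w 0 = w' 0
    · have htail : (fun i : Fin n => w i.succ) = (fun i : Fin n => w' i.succ) := by
        refine ih (P ++ List.ofFn (w 0)) (fun i => w i.succ) (fun i => w' i.succ) ?_ ?_ ?_
        · exact ⟨z, hz, by rw [wordMap_append]; exact hzx⟩
        · exact ⟨z', hz', by rw [wordMap_append, h00]; exact hzx'⟩
        · funext i
          exact congrFun hF i.succ
      funext i
      refine Fin.cases ?_ ?_ i
      · exact h00
      · intro j; exact congrFun htail j
    · exfalso
      by_cases hξ : w 0 = ξ
      · rw [if_pos hξ] at hF0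
        by_cases hξ' : w' 0 = ξ
        · exact h00 (hξ.trans hξ'.symm)
        · rw [if_neg hξ'] at hF0
          -- w 0 = ξ, w' 0 = η
          refine key P (gcomp f (fun i => w i.succ) z)
            (gcomp f (fun i => w' i.succ) z') hzm hzm' ?_ ?_
          · rw [← hξ]; exact hzx
          · rw [hF0]; exact hzx'
      · rw [if_neg hξ] at hF0
        by_cases hξ' : w' 0 = ξ
        · rw [if_pos hξ'] at hF0
          -- w 0 = η, w' 0 = ξ
          refine key P (gcomp f (fun i => w' i.succ) z')
            (gcomp f (fun i => w i.succ) z) hzm' hzm ?_ ?_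
          · rw [← hξ']; exact hzx'
          · rw [← hF0]; exact hzx
        · rw [if_neg hξ'] at hF0
          exact h00 hF0

/-- Injectivity of the substitution map `F_ℓ` (replacing every block equal to `ξ`
by `η`) on the family `Σ_x^ℓ(s)`, under the splitting-type disjointness. -/
theorem stmt4 {Y : Type*} {m k N ℓ : ℕ} (hN : 0 < N)
    (M : Set (Fin m → Y)) (f : Fin k → (Fin m → Y) → (Fin m → Y))
    (hmaps : ∀ i, Set.MapsTo (f i) M M)
    (ξ η : Fin N → Fin k) (hne : ξ ≠ η)
    (h0 : ξ ⟨0, hN⟩ = η ⟨0, hN⟩)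
    (hlast : ξ ⟨N - 1, Nat.sub_lt hN Nat.one_pos⟩ = η ⟨N - 1, Nat.sub_lt hN Nat.one_pos⟩)
    (hdisj : ∀ (s : Fin m) (n : ℕ) (ω : ℕ → Fin k),
      ((fun y => y s) '' (iterMap f ω n '' (wordMap f (List.ofFn ξ) '' M))) ∩
      ((fun y => y s) '' (iterMap f ω n '' (wordMap f (List.ofFn η) '' M))) = ∅)
    (s : Fin m) (x : Y) :
    Set.InjOn (fun w : Fin ℓ → Fin N → Fin k => fun i => if w i = ξ then η else w i)
      {w : Fin ℓ → Fin N → Fin k |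
        x ∈ (fun y => y s) ''
          ((List.ofFn fun i => wordMap f (List.ofFn (w i))).foldr (· ∘ ·) id '' M)} := by
  have key : ∀ (P : List (Fin k)) (y z : Fin m → Y), y ∈ M → z ∈ M →
      wordMap f P (wordMap f (List.ofFn ξ) y) s = x →
      wordMap f P (wordMap f (List.ofFn η) z) s = x → False := by
    intro P y z hy hz hyx hzx
    obtain ⟨ω, hω⟩ := exists_iterMap f (ξ ⟨0, hN⟩) P
    have hx : x ∈
        ((fun y => y s) '' (iterMap f ω P.length '' (wordMap f (List.ofFn ξ) '' M))) ∩
        ((fun y => y s) '' (iterMap f ω P.length '' (wordMap f (List.ofFn η) '' M))) := by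
      constructor
      · exact ⟨iterMap f ω P.length (wordMap f (List.ofFn ξ) y),
          ⟨wordMap f (List.ofFn ξ) y, ⟨y, hy, rfl⟩, rfl⟩, by rw [hω]; exact hyx⟩
      · exact ⟨iterMap f ω P.length (wordMap f (List.ofFn η) z),
          ⟨wordMap f (List.ofFn η) z, ⟨z, hz, rfl⟩, rfl⟩, by rw [hω]; exact hzx⟩
    rw [hdisj s P.length ω] at hx
    exact hx
  intro w hw w' hw' hF
  obtain ⟨y, ⟨z, hz, rfl⟩, hys⟩ := hw
  obtain ⟨y', ⟨z', hz', rfl⟩, hys'⟩ := hw'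
  exact aux hmaps key ℓ [] w w' ⟨z, hz, hys⟩ ⟨z', hz', hys'⟩ hF
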